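/- Let q ≥ 2 be a prime power and a an integer with a² ≤ 4q, and let α, β ∈ ℂ be the two roots of x² − ax + q. If α/β is a root of unity, then there exist infinitely many positive integers n such that q^n + 1 − (α^n + β^n) is the square of an integer. -/

import Mathlib

theorem infinitely_many_squares
    (q : ℕ) (hq : IsPrimePow q) (hq2 : 2 ≤ q)
    (a : ℤ) (ha : a ^ 2 ≤ 4 * (q : ℤ))
    (α β : ℂ) (hsum : α + β = (a : ℂ)) (hprod : α * β = (q : ℂ))
    (hroot : ∃ k : ℕ, 0 < k ∧ (α / β) ^ k = 1) :
    {n : ℕ | 0 < n ∧ ∃ u : ℤ, (q : ℂ) ^ n + 1 - (α ^ n + β ^ n) = (u : ℂ) ^ 2}.Infinite := by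
  obtain ⟨k, hk, hrk⟩ := hroot
  have hq0 : (q : ℂ) ≠ 0 := by
    exact_mod_cast Nat.cast_ne_zero.mpr (by omega)
  have hβ : β ≠ 0 := by
    intro h; rw [h, mul_zero] at hprod; exact hq0 hprod.symm
  have hα : α ≠ 0 := by
    intro h; rw [h, zero_mul] at hprod; exact hq0 hprod.symm
  have hα2k : α ^ (2 * k) = (q : ℂ) ^ k := by
    have : α ^ 2 = (α / β) * (α * β) := by field_simp
    rw [pow_mul, this, mul_pow, hrk, one_mul, hprod]
  have hβ2k : β ^ (2 * k) = (q : ℂ) ^ k := by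
    have hrk' : (β / α) ^ k = 1 := by
      have := congrArg (·⁻¹) hrk
      simpa [div_pow, inv_div] using this
    have : β ^ 2 = (β / α) * (α * β) := by field_simp
    rw [pow_mul, this, mul_pow, hrk', one_mul, hprod]
  apply Set.infinite_of_injective_forall_mem
    (f := fun m : ℕ => 2 * k * (m + 1))

  · intro m n h
    have := Nat.eq_of_mul_eq_mul_left (show 0 < 2*k by omega) h
    omega
  · intro m
    refine ⟨by positivity, ((q : ℤ) ^ (k * (m + 1)) - 1), ?_⟩
    have hαn : α ^ (2 * k * (m + 1)) = (q : ℂ) ^ (k * (m + 1)) := by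
      rw [pow_mul, hα2k, ← pow_mul]
    have hβn : β ^ (2 * k * (m + 1)) = (q : ℂ) ^ (k * (m + 1)) := by
      rw [pow_mul, hβ2k, ← pow_mul]
    rw [hαn, hβn]
    push_cast
    rw [show 2 * k * (m + 1) = (k * (m + 1)) * 2 by ring, pow_mul]
    ring
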